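/- arXiv:2009.04451 — 2 statements merged into one kernel-verified Lean document; each statement's English description precedes it below -/
import Mathlib

section
/- Let R be a commutative Noetherian ring and F : 0 → F_b → ⋯ → F_a → 0 a finite free R-complex with differentials ∂_n. For every integer n with a ≤ n ≤ b one has dim(R/I_{s_n}(∂_{n+1})) ≤ dim_R F + n, where s_n = Σ_{i ≤ n} (−1)^{n−i} rank_R F_i. -/
open Matrix

/-- Convert a Krull-dimension value (in `WithBot ℕ∞`) to an extended real. -/
noncomputable def krullDimToEReal (d : WithBot ℕ∞) : EReal :=
  WithBot.recBotCoe ⊥ (fun d' => WithTop.recTopCoe ⊤ (fun m : ℕ => ((m : ℝ) : EReal)) d') d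

/-- Krull dimension of a ring, as an extended real. -/
noncomputable def ringDimE (R : Type) [CommRing R] : EReal := krullDimToEReal (ringKrullDim R)

/-- Krull dimension of a module: the dimension of `R ⧸ ann M`, `-∞` for the zero module. -/
noncomputable def moduleDimE (R : Type) [CommRing R] (M : Type) [AddCommGroup M] [Module R M] :
    EReal :=
  krullDimToEReal (ringKrullDim (R ⧸ Module.annihilator R M))

/-- A finite free complex `F : 0 → F_b → ⋯ → F_a → 0`, encoded by the ranks of the `F_i`
and the matrices of the differentials: `d n` is the matrix of `∂_{n+1} : F_{n+1} → F_n`. -/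
structure FinFreeComplex (R : Type) [CommRing R] where
  a : ℤ
  b : ℤ
  rank : ℤ → ℕ
  d : ∀ n : ℤ, Matrix (Fin (rank n)) (Fin (rank (n + 1))) R
  rank_eq_zero : ∀ n : ℤ, n < a ∨ b < n → rank n = 0
  d_comp_d : ∀ n : ℤ, d n * d (n + 1) = 0

namespace FinFreeComplex

variable {R : Type} [CommRing R] (F : FinFreeComplex R)

/-- The `n`-th homology of `F`: `ker ∂_n / im ∂_{n+1}`. -/
abbrev homologyAt (n : ℤ) : Type :=
  ↥(LinearMap.ker (F.d (n - 1)).mulVecLin) ⧸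
    (LinearMap.range (F.d (n - 1 + 1)).mulVecLin).comap
      (LinearMap.ker (F.d (n - 1)).mulVecLin).subtype

/-- Foxby's Krull dimension of the complex `F`: `sup { dim H_n(F) - n }`. -/
noncomputable def dim : EReal :=
  ⨆ n : ℤ, (moduleDimE R (F.homologyAt n) - ((n : ℝ) : EReal))

/-- `s_n = Σ_{i ≤ n} (-1)^{n-i} rank F_i`. -/
noncomputable def s (n : ℤ) : ℤ := ∑ᶠ i ∈ Set.Iic n, (-1 : ℤ) ^ (n - i).toNat * (F.rank i : ℤ)

end FinFreeComplex

/-- The ideal of `s × s` minors of a matrix, with the conventions that it is the unit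
ideal when `s ≤ 0` or when the matrix is empty (`0 × 0`), and that an `s × s` minor of a
nonempty matrix is `0` when `s` exceeds the number of rows or columns. -/
noncomputable def minorsIdeal {R : Type} [CommRing R] {p q : ℕ} (A : Matrix (Fin p) (Fin q) R)
    (s : ℤ) : Ideal R :=
  if s ≤ 0 then ⊤
  else if p = 0 ∧ q = 0 then ⊤
  else Ideal.span {x : R | ∃ (f : Fin s.toNat → Fin p) (g : Fin s.toNat → Fin q),
    Function.Injective f ∧ Function.Injective g ∧ x = (A.submatrix f g).det}


section Helpers

lemma EReal_top_le_of_nat {y : EReal} (h : ∀ c : ℕ, ((c : ℝ) : EReal) ≤ y) : (⊤ : EReal) ≤ y := by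
  induction y using EReal.rec with
  | bot => simpa using h 0
  | coe r =>
    obtain ⟨c, hc⟩ := exists_nat_gt r
    exact absurd (EReal.coe_le_coe_iff.mp (h c)) (not_le.mpr hc)
  | top => exact le_rfl

lemma cast_le_krullDimToEReal {c : ℕ} {x : WithBot ℕ∞} (h : ((c : ℕ∞) : WithBot ℕ∞) ≤ x) :
    ((c : ℝ) : EReal) ≤ krullDimToEReal x := by
  cases x with
  | bot => simp [le_bot_iff] at h
  | coe d =>
    cases d with
    | top => exact le_top
    | coe k =>
      have hck : c ≤ k := by exact_mod_cast h
      show ((c : ℝ) : EReal) ≤ ((k : ℝ) : EReal)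
      exact_mod_cast hck

lemma krullDimToEReal_le_of_length {α : Type*} [Preorder α] {y : EReal}
    (h : ∀ l : LTSeries α, ((l.length : ℝ) : EReal) ≤ y) :
    krullDimToEReal (Order.krullDim α) ≤ y := by
  rcases isEmpty_or_nonempty α with he | hn
  · rw [Order.krullDim_eq_bot]; exact bot_le
  · have key : ∀ c : ℕ, ((c : ℕ∞) ≤ ⨆ l : LTSeries α, (l.length : ℕ∞)) → ((c : ℝ) : EReal) ≤ y := by
      intro c hc
      cases c with
      | zero =>
        simpa using h (RelSeries.singleton _ (Classical.arbitrary α))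
      | succ c' =>
        have h1 : ((c' : ℕ∞)) < ⨆ l : LTSeries α, (l.length : ℕ∞) :=
          lt_of_lt_of_le (by exact_mod_cast Nat.lt_succ_self c') hc
        rw [lt_iSup_iff] at h1
        obtain ⟨l, hl⟩ := h1
        have h2 : c' + 1 ≤ l.length := by exact_mod_cast hl
        calc ((c' + 1 : ℕ) : ℝ) ≤ ((l.length : ℝ) : EReal) := by exact_mod_cast h2
          _ ≤ y := h l
    rw [Order.krullDim_eq_iSup_length]
    by_cases hS : (⨆ l : LTSeries α, (l.length : ℕ∞)) = ⊤
    · rw [hS]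
      exact EReal_top_le_of_nat fun c => key c (hS ▸ le_top)
    · lift (⨆ l : LTSeries α, (l.length : ℕ∞)) to ℕ using hS with k hk
      exact key k le_rfl

lemma ereal_step {c : ℕ} {Dm D : EReal} {m n : ℤ} (hL : ((c : ℝ) : EReal) ≤ Dm)
    (hD : Dm - ((m : ℝ) : EReal) ≤ D) (hmn : m ≤ n) :
    ((c : ℝ) : EReal) ≤ D + ((n : ℝ) : EReal) := by
  induction Dm using EReal.rec with
  | bot => exact absurd hL (by rw [le_bot_iff]; exact EReal.coe_ne_bot _)
  | coe x =>
    rw [← EReal.coe_sub] at hD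
    calc ((c : ℝ) : EReal) ≤ ((x : ℝ) : EReal) := hL
      _ = ((x - (m : ℝ) : ℝ) : EReal) + (((m : ℤ) : ℝ) : EReal) := by
          rw [← EReal.coe_add]; norm_num
      _ ≤ D + ((n : ℝ) : EReal) := add_le_add hD (by exact_mod_cast hmn)
  | top =>
    rw [EReal.top_sub_coe, top_le_iff] at hD
    rw [hD, EReal.top_add_coe]
    exact le_top


section DetExpansion
variable {S : Type*} [CommRing S]

lemma det_mul_row_expansion {s m : ℕ} (P : Matrix (Fin s) (Fin m) S) (Q : Matrix (Fin m) (Fin s) S) :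
    (P * Q).det = ∑ f : Fin s → Fin m, (∏ i, P i (f i)) * (Q.submatrix f id).det := by
  have h : (P * Q) = Matrix.of fun i => ∑ j, P i j • Q j := by
    ext i k; simp [Matrix.mul_apply, Finset.sum_apply]
  rw [h]
  calc Matrix.det (Matrix.of fun i => ∑ j, P i j • Q j)
      = Matrix.detRowAlternating (fun i => ∑ j, P i j • Q j) := rfl
    _ = ∑ f : Fin s → Fin m, Matrix.detRowAlternating (fun i => P i (f i) • Q (f i)) :=
        Matrix.detRowAlternating.toMultilinearMap.map_sum (fun i j => P i j • Q j)
    _ = ∑ f : Fin s → Fin m, (∏ i, P i (f i)) * (Q.submatrix f id).det := by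
        refine Finset.sum_congr rfl fun f _ => ?_
        rw [show (Matrix.detRowAlternating fun i => P i (f i) • Q (f i)) =
            (∏ i, P i (f i)) • Matrix.detRowAlternating (fun i => Q (f i)) from
          Matrix.detRowAlternating.toMultilinearMap.map_smul_univ _ _, smul_eq_mul]
        rfl

lemma one_mem_of_sandwich {s p q : ℕ} (A : Matrix (Fin p) (Fin q) S)
    (V : Matrix (Fin s) (Fin p) S) (U : Matrix (Fin q) (Fin s) S) (h : V * A * U = 1)
    (J : Ideal S)
    (hJ : ∀ (f : Fin s → Fin p) (g : Fin s → Fin q), Function.Injective f →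
      Function.Injective g → ((A.submatrix f g).det) ∈ J) : (1 : S) ∈ J := by
  have h1 : (1 : S) = (V * (A * U)).det := by rw [← Matrix.mul_assoc, h, Matrix.det_one]
  rw [det_mul_row_expansion] at h1
  have hsub : ∀ f : Fin s → Fin p, (A * U).submatrix f id = (A.submatrix f id) * U := by
    intro f; ext i k; simp [Matrix.mul_apply]
  have hexp : ∀ f : Fin s → Fin p, ((A.submatrix f id) * U).det =
      ∑ g : Fin s → Fin q, (∏ i, U (g i) i) * ((A.submatrix f g).det) := by
    intro f
    rw [← Matrix.det_transpose, Matrix.transpose_mul, det_mul_row_expansion]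
    refine Finset.sum_congr rfl fun g _ => ?_
    congr 1
    have : ((A.submatrix f id).transpose.submatrix g id) = (A.submatrix f g).transpose := by
      ext i j; simp
    rw [this, Matrix.det_transpose]
  rw [h1]
  refine Ideal.sum_mem _ fun f _ => ?_
  rw [hsub, hexp, Finset.mul_sum]
  refine Ideal.sum_mem _ fun g _ => ?_
  by_cases hf : Function.Injective f
  · by_cases hg : Function.Injective g
    · exact Ideal.mul_mem_left _ _ (Ideal.mul_mem_left _ _ (hJ f g hf hg))
    · obtain ⟨i, j, hij, hne⟩ := Function.not_injective_iff.mp hg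
      have : (A.submatrix f g).det = 0 :=
        Matrix.det_zero_of_column_eq hne (by intro k; simp [hij])
      rw [this, mul_zero, mul_zero]; exact Ideal.zero_mem _
  · obtain ⟨i, j, hij, hne⟩ := Function.not_injective_iff.mp hf
    have : (A.submatrix f g).det = 0 :=
      Matrix.det_zero_of_row_eq hne (by ext k; simp [hij])
    rw [this, mul_zero, mul_zero]; exact Ideal.zero_mem _

lemma map_mulVec' {R : Type*} [CommRing R] (φ : R →+* S) {p q : ℕ}
    (B : Matrix (Fin p) (Fin q) R) (y : Fin q → R) :
    (B.map φ) *ᵥ (φ ∘ y) = φ ∘ (B *ᵥ y) := by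
  ext i; simp [Matrix.mulVec, dotProduct, map_sum]

lemma ann_smul_mem {R M : Type*} [CommRing R] [AddCommGroup M] [Module R M]
    (K W : Submodule R M) {t : R}
    (ht : t ∈ Module.annihilator R (↥K ⧸ W.comap K.subtype)) {y : M} (hy : y ∈ K) :
    t • y ∈ W := by
  have h := Module.mem_annihilator.mp ht (Submodule.Quotient.mk ⟨y, hy⟩)
  rw [← Submodule.Quotient.mk_smul, Submodule.Quotient.mk_eq_zero] at h
  simpa using h
end DetExpansion


namespace FinFreeComplex
variable {R : Type} [CommRing R] (F : FinFreeComplex R)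

lemma s_eq_sum (m : ℤ) :
    F.s m = ∑ i ∈ Finset.Icc F.a m, (-1 : ℤ) ^ (m - i).toNat * (F.rank i : ℤ) := by
  apply finsum_mem_eq_sum_of_inter_support_eq
  ext i
  simp only [Set.mem_inter_iff, Set.mem_Iic, Function.mem_support, Finset.coe_Icc,
    Set.mem_Icc, ne_eq]
  constructor
  · rintro ⟨h1, h2⟩
    refine ⟨⟨?_, h1⟩, h2⟩
    by_contra hia
    exact h2 (by simp [F.rank_eq_zero i (Or.inl (by omega))])
  · rintro ⟨⟨_, h1⟩, h2⟩
    exact ⟨h1, h2⟩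

lemma s_eq_zero {m : ℤ} (h : m < F.a) : F.s m = 0 := by
  rw [s_eq_sum, Finset.Icc_eq_empty (by omega), Finset.sum_empty]

lemma s_rec {m : ℤ} (h : F.a ≤ m) : F.s m = (F.rank m : ℤ) - F.s (m - 1) := by
  rw [s_eq_sum, s_eq_sum]
  rw [show Finset.Icc F.a m = insert m (Finset.Icc F.a (m - 1)) from by
    ext j; simp only [Finset.mem_Icc, Finset.mem_insert]; omega]
  rw [Finset.sum_insert (by simp)]
  have h1 : (m - m).toNat = 0 := by omega
  rw [h1, pow_zero, one_mul]
  congr 1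
  rw [← Finset.sum_neg_distrib]
  refine Finset.sum_congr rfl fun i hi => ?_
  rw [Finset.mem_Icc] at hi
  have h2 : (m - i).toNat = (m - 1 - i).toNat + 1 := by omega
  rw [h2, pow_succ]
  ring


end FinFreeComplex

section LocalPart
variable {S : Type} [CommRing S] [IsNoetherianRing S] [IsLocalRing S]

lemma split_ker {q r : ℕ} (f : (Fin q → S) →ₗ[S] (Fin r → S))
    (hfree : Module.Free S ↥(LinearMap.range f)) :
    ∃ W : Submodule S (Fin q → S), IsCompl (LinearMap.ker f) W ∧
      Module.Free S ↥(LinearMap.ker f) ∧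
      Module.finrank S ↥(LinearMap.ker f) + Module.finrank S ↥(LinearMap.range f) = q := by
  haveI := hfree
  haveI : Module.Finite S ↥(LinearMap.range f) :=
    Module.Finite.iff_fg.mpr (IsNoetherian.noetherian _)
  obtain ⟨σ, hσ⟩ := Module.projective_lifting_property f.rangeRestrict LinearMap.id
    (LinearMap.surjective_rangeRestrict f)
  have hσap : ∀ w, f.rangeRestrict (σ w) = w := fun w => by
    exact LinearMap.congr_fun hσ w
  set j := σ ∘ₗ f.rangeRestrict with hj
  have hjmem : ∀ x, x - j x ∈ LinearMap.ker f := by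
    intro x
    rw [← LinearMap.ker_rangeRestrict, LinearMap.mem_ker, map_sub]
    show f.rangeRestrict x - f.rangeRestrict (σ (f.rangeRestrict x)) = 0
    rw [hσap, sub_self]
  set pr : (Fin q → S) →ₗ[S] ↥(LinearMap.ker f) :=
    (LinearMap.id - j).codRestrict (LinearMap.ker f) hjmem with hprdef
  have hprap : ∀ x : ↥(LinearMap.ker f), pr (x : Fin q → S) = x := by
    intro x
    apply Subtype.ext
    show (x : Fin q → S) - j (x : Fin q → S) = x
    have hj0 : j (x : Fin q → S) = 0 := by
      show σ (f.rangeRestrict (x : Fin q → S)) = 0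
      have hx0 : f.rangeRestrict (x : Fin q → S) = 0 := by
        rw [← LinearMap.mem_ker, LinearMap.ker_rangeRestrict]; exact x.2
      rw [hx0, map_zero]
    rw [hj0, sub_zero]
  have hcompl2 : IsCompl (LinearMap.ker f) (LinearMap.ker pr) := LinearMap.isCompl_of_proj hprap
  haveI : Module.Finite S ↥(LinearMap.ker f) :=
    Module.Finite.iff_fg.mpr (IsNoetherian.noetherian _)
  haveI : Module.Finite S ↥(LinearMap.ker pr) :=
    Module.Finite.iff_fg.mpr (IsNoetherian.noetherian _)
  haveI : Module.Projective S ↥(LinearMap.ker f) :=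
    Module.Projective.of_split (LinearMap.ker f).subtype pr (LinearMap.ext fun x => hprap x)
  haveI : Module.Projective S ↥(LinearMap.ker pr) :=
    Module.Projective.of_split (LinearMap.ker pr).subtype
      (Submodule.linearProjOfIsCompl _ _ hcompl2.symm)
      (LinearMap.ext fun x => Submodule.linearProjOfIsCompl_apply_left hcompl2.symm x)
  haveI : Module.FinitePresentation S ↥(LinearMap.ker f) :=
    Module.finitePresentation_of_projective _ _
  haveI hfreeker : Module.Free S ↥(LinearMap.ker f) := Module.free_of_flat_of_isLocalRing
  haveI : Module.FinitePresentation S ↥(LinearMap.ker pr) :=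
    Module.finitePresentation_of_projective _ _
  haveI : Module.Free S ↥(LinearMap.ker pr) := Module.free_of_flat_of_isLocalRing
  have hσinj : Function.Injective σ := by
    intro a1 a2 haa
    have h2 : f.rangeRestrict (σ a1) = f.rangeRestrict (σ a2) := by rw [haa]
    rwa [hσap, hσap] at h2
  have hrangeσ : LinearMap.range σ = LinearMap.ker pr := by
    apply le_antisymm
    · rintro _ ⟨w, rfl⟩
      rw [LinearMap.mem_ker]
      apply Subtype.ext
      show σ w - j (σ w) = 0
      rw [hj]
      show σ w - σ (f.rangeRestrict (σ w)) = 0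
      rw [hσap, sub_self]
    · intro x hx
      rw [LinearMap.mem_ker] at hx
      have hx2 : x - j x = 0 := congrArg Subtype.val hx
      refine ⟨f.rangeRestrict x, ?_⟩
      show σ (f.rangeRestrict x) = x
      rw [eq_comm]
      rw [← sub_eq_zero]
      exact hx2
  have hfr2 : Module.finrank S ↥(LinearMap.ker pr) = Module.finrank S ↥(LinearMap.range f) := by
    rw [← hrangeσ]
    exact (LinearEquiv.finrank_eq (LinearEquiv.ofInjective σ hσinj)).symm
  have hsum : Module.finrank S ↥(LinearMap.ker f) + Module.finrank S ↥(LinearMap.ker pr) = q := by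
    have h1 := LinearEquiv.finrank_eq (Submodule.prodEquivOfIsCompl _ _ hcompl2)
    rw [Module.finrank_prod] at h1
    simpa [Module.finrank_pi] using h1
  exact ⟨LinearMap.ker pr, hcompl2, hfreeker, by omega⟩

lemma exists_sandwich {q r : ℕ} (B : Matrix (Fin r) (Fin q) S)
    (hfree : Module.Free S ↥(LinearMap.range B.mulVecLin))
    (W : Submodule S (Fin r → S)) (hcompl : IsCompl (LinearMap.range B.mulVecLin) W) :
    ∃ (V : Matrix (Fin (Module.finrank S ↥(LinearMap.range B.mulVecLin))) (Fin r) S)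
      (U : Matrix (Fin q) (Fin (Module.finrank S ↥(LinearMap.range B.mulVecLin))) S),
      V * B * U = 1 := by
  haveI := hfree
  set f := B.mulVecLin with hfdef
  haveI : Module.Finite S ↥(LinearMap.range f) :=
    Module.Finite.iff_fg.mpr (IsNoetherian.noetherian _)
  obtain ⟨σ, hσ⟩ := Module.projective_lifting_property f.rangeRestrict LinearMap.id
    (LinearMap.surjective_rangeRestrict f)
  have hσap : ∀ w, f.rangeRestrict (σ w) = w := fun w => by
    exact LinearMap.congr_fun hσ w
  set ρ := Submodule.projectionOnto _ W hcompl with hρ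
  set bb := Module.finBasis S ↥(LinearMap.range f) with hbb
  set u := σ ∘ₗ (bb.equivFun.symm :
    (Fin (Module.finrank S ↥(LinearMap.range f)) → S) ≃ₗ[S] _).toLinearMap with hu
  set v := (bb.equivFun :
    _ ≃ₗ[S] (Fin (Module.finrank S ↥(LinearMap.range f)) → S)).toLinearMap ∘ₗ ρ with hv
  have hvu : v ∘ₗ (f ∘ₗ u) = LinearMap.id := by
    apply LinearMap.ext; intro x
    have h1 : f (σ (bb.equivFun.symm x)) =
        ((bb.equivFun.symm x : ↥(LinearMap.range f)) : Fin r → S) := by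
      have h2 := hσap (bb.equivFun.symm x)
      have h3 : ((f.rangeRestrict (σ (bb.equivFun.symm x))) : Fin r → S)
          = f (σ (bb.equivFun.symm x)) := rfl
      rw [← h3, h2]
    show bb.equivFun (ρ (f (σ (bb.equivFun.symm x)))) = x
    rw [h1, Submodule.projectionOnto_apply_left hcompl]
    exact bb.equivFun.apply_symm_apply x
  refine ⟨LinearMap.toMatrix' v, LinearMap.toMatrix' u, ?_⟩
  have h1 : LinearMap.toMatrix' (v ∘ₗ (B.mulVecLin ∘ₗ u)) = 1 := by
    rw [hvu]
    exact LinearMap.toMatrix'_id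
  rw [LinearMap.toMatrix'_comp, LinearMap.toMatrix'_comp, ← Matrix.toLin'_apply',
    LinearMap.toMatrix'_toLin'] at h1
  rw [Matrix.mul_assoc]
  exact h1


end LocalPart

theorem FinFreeComplex.exists_ann_le {R : Type} [CommRing R] [IsNoetherianRing R]
    (F : FinFreeComplex R) (n : ℤ) (han : F.a ≤ n) (P : PrimeSpectrum R)
    (hp : minorsIdeal (F.d n) (F.s n) ≤ P.asIdeal) :
    ∃ m : ℤ, m ≤ n ∧ Module.annihilator R (F.homologyAt m) ≤ P.asIdeal := by
  classical
  by_contra hcon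
  push_neg at hcon
  have hc : ∀ m : ℤ, m ≤ n → ∃ t ∈ Module.annihilator R (F.homologyAt m), t ∉ P.asIdeal := by
    intro m hm
    exact SetLike.not_le_iff_exists.mp (hcon m hm)
  by_cases h0 : F.s n ≤ 0
  · rw [minorsIdeal, if_pos h0, top_le_iff] at hp
    exact P.isPrime.ne_top hp
  by_cases hz : F.rank n = 0 ∧ F.rank (n + 1) = 0
  · rw [minorsIdeal, if_neg h0, if_pos hz, top_le_iff] at hp
    exact P.isPrime.ne_top hp
  -- set up localization
  set A := Localization.AtPrime P.asIdeal with hA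
  haveI : IsNoetherianRing A := IsLocalization.isNoetherianRing P.asIdeal.primeCompl _ inferInstance
  set φ := algebraMap R A with hφ
  set M : ∀ k : ℤ, Matrix (Fin (F.rank k)) (Fin (F.rank (k + 1))) A := fun k => (F.d k).map φ
    with hM
  -- exactness of localized complex
  have hE : ∀ k : ℤ, k ≤ n - 1 →
      LinearMap.ker (M k).mulVecLin ≤ LinearMap.range (M (k + 1)).mulVecLin := by
    intro k hk
    obtain ⟨t, htann, htp⟩ := hc (k + 1) (by omega)
    have hstep : ∀ y ∈ LinearMap.ker (F.d (k + 1 - 1)).mulVecLin,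
        t • y ∈ LinearMap.range (F.d (k + 1 - 1 + 1)).mulVecLin :=
      fun y hy => ann_smul_mem _ _ htann hy
    rw [show (k : ℤ) + 1 - 1 = k from by omega] at hstep
    intro x hx
    rw [LinearMap.mem_ker, Matrix.mulVecLin_apply] at hx
    obtain ⟨bden, hb⟩ := IsLocalization.exist_integer_multiples P.asIdeal.primeCompl
      Finset.univ x
    have hb' : ∀ i, ∃ r : R, φ r = (bden : R) • x i := fun i => hb i (Finset.mem_univ i)
    choose y hy using hb'
    have hydk : ∀ i, φ (((F.d k) *ᵥ y) i) = 0 := by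
      intro i
      have : φ (((F.d k) *ᵥ y) i) = (bden : R) • (((M k) *ᵥ x) i) := by
        simp only [Matrix.mulVec, dotProduct, map_sum, hM, Matrix.map_apply,
          Finset.smul_sum]
        refine Finset.sum_congr rfl fun j _ => ?_
        rw [_root_.map_mul, hy j, Algebra.smul_def, Algebra.smul_def]
        ring
      rw [this, hx]
      simp
    have hcz : ∀ i, ∃ c : P.asIdeal.primeCompl, (c : R) * ((F.d k) *ᵥ y) i = 0 := by
      intro i
      exact (IsLocalization.map_eq_zero_iff P.asIdeal.primeCompl A _).mp (hydk i)
    choose c hcc using hcz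
    set C : R := ∏ i, (c i : R) with hC
    have hCmem : C ∈ P.asIdeal.primeCompl :=
      Submonoid.prod_mem _ fun i _ => (c i).2
    have hCy : (F.d k) *ᵥ (C • y) = 0 := by
      ext i
      rw [Matrix.mulVec_smul]
      show C * ((F.d k) *ᵥ y) i = 0
      rw [hC, ← Finset.prod_erase_mul Finset.univ _ (Finset.mem_univ i), mul_assoc, hcc i,
        mul_zero]
    obtain ⟨z, hzz⟩ := hstep (C • y) (by rw [LinearMap.mem_ker, Matrix.mulVecLin_apply]; exact hCy)
    rw [Matrix.mulVecLin_apply] at hzz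
    -- now assemble
    have hunit : IsUnit (φ (t * C * (bden : R))) :=
      IsLocalization.map_units A ⟨t * C * bden, mul_mem (mul_mem htp hCmem) bden.2⟩
    obtain ⟨v, hv⟩ := hunit.exists_left_inv
    refine ⟨v • (φ ∘ z), ?_⟩
    rw [Matrix.mulVecLin_apply, Matrix.mulVec_smul]
    have h2 : (M (k + 1)) *ᵥ (φ ∘ z) = fun i => φ (t * C * (bden : R)) * x i := by
      have h3 := map_mulVec' φ (F.d (k + 1)) z
      rw [hzz] at h3
      rw [hM]
      rw [h3]
      ext i
      show φ ((t • C • y) i) = _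
      rw [show (t • C • y) i = t * (C * y i) from rfl, _root_.map_mul, _root_.map_mul, hy i,
        Algebra.smul_def, _root_.map_mul, _root_.map_mul]
      ring
    rw [h2]
    ext i
    show v * (φ (t * C * (bden : R)) * x i) = x i
    rw [← mul_assoc, hv, one_mul]
  -- complex property
  have hcomplex : ∀ k : ℤ,
      LinearMap.range (M (k + 1)).mulVecLin ≤ LinearMap.ker (M k).mulVecLin := by
    intro k
    rintro _ ⟨w, rfl⟩
    rw [LinearMap.mem_ker, Matrix.mulVecLin_apply, Matrix.mulVecLin_apply,
      Matrix.mulVec_mulVec]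
    have : (M k) * (M (k + 1)) = 0 := by
      rw [hM]
      show ((F.d k).map (φ : R →+* A)) * ((F.d (k + 1)).map (φ : R →+* A)) = 0
      rw [← Matrix.map_mul, F.d_comp_d k, Matrix.map_zero _ (map_zero φ)]
    rw [this, Matrix.zero_mulVec]
  haveI : IsLocalRing A := inferInstance
  -- inductive splitting
  have IND : ∀ k : ℤ, F.a - 1 ≤ k → k ≤ n →
      ∃ W : Submodule A (Fin (F.rank k) → A),
        IsCompl (LinearMap.range (M k).mulVecLin) W ∧
        Module.Free A ↥(LinearMap.range (M k).mulVecLin) ∧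
        F.s k = (Module.finrank A ↥(LinearMap.range (M k).mulVecLin) : ℤ) := by
    refine Int.le_induction (motive := fun k _ => k ≤ n →
      ∃ W : Submodule A (Fin (F.rank k) → A),
        IsCompl (LinearMap.range (M k).mulVecLin) W ∧
        Module.Free A ↥(LinearMap.range (M k).mulVecLin) ∧
        F.s k = (Module.finrank A ↥(LinearMap.range (M k).mulVecLin) : ℤ)) ?_ ?_
    · intro _
      haveI : IsEmpty (Fin (F.rank (F.a - 1))) := by
        rw [F.rank_eq_zero (F.a - 1) (Or.inl (by omega))]
        infer_instance
      haveI : Subsingleton (Fin (F.rank (F.a - 1)) → A) :=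
        ⟨fun f g => funext fun i => (IsEmpty.false i).elim⟩
      have htop : LinearMap.range (M (F.a - 1)).mulVecLin = ⊤ :=
        Submodule.eq_top_iff'.mpr fun x => by rw [Subsingleton.elim x 0]; exact zero_mem _
      refine ⟨⊥, ?_, ?_, ?_⟩
      · rw [htop]; exact isCompl_top_bot
      · infer_instance
      · rw [F.s_eq_zero (by omega), Module.finrank_zero_of_subsingleton]
        simp
    · intro k hk ih hk1n
      obtain ⟨W, hcompl, hfree, hrank⟩ := ih (by omega)
      obtain ⟨W2, hcompl2, hfreeker, hsum⟩ := split_ker (M k).mulVecLin hfree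
      have heq : LinearMap.range (M (k + 1)).mulVecLin = LinearMap.ker (M k).mulVecLin :=
        le_antisymm (hcomplex k) (hE k (by omega))
      refine ⟨W2, ?_, ?_, ?_⟩
      · rw [heq]; exact hcompl2
      · rw [heq]; exact hfreeker
      · rw [heq]
        have hs := F.s_rec (m := k + 1) (by omega)
        rw [show (k : ℤ) + 1 - 1 = k from by omega] at hs
        omega
  -- final stage
  obtain ⟨W, hcompl, hfree, hrank⟩ := IND n (by omega) le_rfl
  obtain ⟨V, U, hVU⟩ := exists_sandwich (M n) hfree W hcompl
  have hsn : (F.s n).toNat = Module.finrank A ↥(LinearMap.range (M n).mulVecLin) := by omega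
  have h1mem : (1 : A) ∈ Ideal.map φ (minorsIdeal (F.d n) (F.s n)) := by
    rw [minorsIdeal, if_neg h0, if_neg hz]
    apply one_mem_of_sandwich (M n) V U hVU
    intro f' g' hfinj hginj
    have hmap : ((M n).submatrix f' g').det =
        φ (((F.d n).submatrix (f' ∘ Fin.cast hsn) (g' ∘ Fin.cast hsn)).det) := by
      calc ((M n).submatrix f' g').det
          = (((M n).submatrix f' g').submatrix (finCongr hsn) (finCongr hsn)).det :=
            (Matrix.det_submatrix_equiv_self _ _).symm
        _ = ((((F.d n).submatrix (f' ∘ Fin.cast hsn) (g' ∘ Fin.cast hsn))).map φ).det := by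
            congr 1
        _ = φ (((F.d n).submatrix (f' ∘ Fin.cast hsn) (g' ∘ Fin.cast hsn)).det) := by
            rw [RingHom.map_det, RingHom.mapMatrix_apply]
    rw [hmap]
    exact Ideal.mem_map_of_mem φ (Ideal.subset_span ⟨f' ∘ Fin.cast hsn, g' ∘ Fin.cast hsn,
      hfinj.comp (Fin.cast_injective hsn), hginj.comp (Fin.cast_injective hsn), rfl⟩)
  have h2 : Ideal.map φ (minorsIdeal (F.d n) (F.s n)) ≤ IsLocalRing.maximalIdeal A := by
    rw [Ideal.map_le_iff_le_comap]
    intro x hx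
    rw [Ideal.mem_comap]
    exact (IsLocalization.AtPrime.to_map_mem_maximal_iff A P.asIdeal x).mpr (hp hx)
  exact (IsLocalRing.maximalIdeal.isMaximal A).ne_top
    (Ideal.eq_top_iff_one _ |>.mpr (h2 h1mem))


end Helpers

/-- For every integer `n` with `a ≤ n ≤ b` one has
`dim (R / I_{s_n}(∂_{n+1})) ≤ dim_R F + n`. -/
theorem FinFreeComplex.dim_quotient_minors_le (R : Type) [CommRing R] [IsNoetherianRing R]
    (F : FinFreeComplex R) (n : ℤ) (han : F.a ≤ n) (hnb : n ≤ F.b) :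
    krullDimToEReal (ringKrullDim (R ⧸ minorsIdeal (F.d n) (F.s n)))
      ≤ F.dim + ((n : ℝ) : EReal) := by
  classical
  refine krullDimToEReal_le_of_length ?_
  intro l
  set π : R →+* R ⧸ minorsIdeal (F.d n) (F.s n) := Ideal.Quotient.mk _ with hπ
  have hIp0 : minorsIdeal (F.d n) (F.s n) ≤ (PrimeSpectrum.comap π (l.toFun 0)).asIdeal := by
    rw [PrimeSpectrum.comap_asIdeal]
    intro x hx
    rw [Ideal.mem_comap]
    rw [show π x = 0 from Ideal.Quotient.eq_zero_iff_mem.mpr hx]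
    exact zero_mem _
  obtain ⟨m, hmn, hann⟩ := F.exists_ann_le n han _ hIp0
  set J := Module.annihilator R (F.homologyAt m) with hJdef
  have hJle : ∀ i, J ≤ (PrimeSpectrum.comap π (l.toFun i)).asIdeal := by
    intro i
    refine le_trans hann ?_
    rw [PrimeSpectrum.comap_asIdeal, PrimeSpectrum.comap_asIdeal]
    exact Ideal.comap_mono
      ((PrimeSpectrum.asIdeal_le_asIdeal _ _).mpr (l.monotone (Fin.zero_le i)))
  let c : Fin (l.length + 1) → PrimeSpectrum (R ⧸ J) := fun i =>
    ⟨Ideal.map (Ideal.Quotient.mk J) (PrimeSpectrum.comap π (l.toFun i)).asIdeal,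
     Ideal.map_isPrime_of_surjective Ideal.Quotient.mk_surjective
       (by rw [Ideal.mk_ker]; exact hJle i)⟩
  have hcomapmap : ∀ i, Ideal.comap (Ideal.Quotient.mk J)
      (Ideal.map (Ideal.Quotient.mk J) (PrimeSpectrum.comap π (l.toFun i)).asIdeal)
      = (PrimeSpectrum.comap π (l.toFun i)).asIdeal := by
    intro i
    rw [Ideal.comap_map_of_surjective _ Ideal.Quotient.mk_surjective]
    rw [show Ideal.comap (Ideal.Quotient.mk J) ⊥ = J from by
      rw [← RingHom.ker_eq_comap_bot, Ideal.mk_ker]]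
    exact sup_eq_left.mpr (hJle i)
  have hstep : ∀ i : Fin l.length, c i.castSucc < c i.succ := by
    intro i
    have hlt := l.step i
    rw [lt_iff_le_and_ne]
    constructor
    · rw [← PrimeSpectrum.asIdeal_le_asIdeal]
      exact Ideal.map_mono (Ideal.comap_mono
        ((PrimeSpectrum.asIdeal_le_asIdeal _ _).mpr hlt.le))
    · intro hceq
      have h1 : (c i.castSucc).asIdeal = (c i.succ).asIdeal := by rw [hceq]
      have h2 := congrArg (Ideal.comap (Ideal.Quotient.mk J)) h1
      rw [show (c i.castSucc).asIdeal = Ideal.map (Ideal.Quotient.mk J)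
        (PrimeSpectrum.comap π (l.toFun i.castSucc)).asIdeal from rfl,
        show (c i.succ).asIdeal = Ideal.map (Ideal.Quotient.mk J)
        (PrimeSpectrum.comap π (l.toFun i.succ)).asIdeal from rfl,
        hcomapmap, hcomapmap] at h2
      have h3 := congrArg (Ideal.map π) h2
      rw [PrimeSpectrum.comap_asIdeal, PrimeSpectrum.comap_asIdeal,
        Ideal.map_comap_of_surjective π Ideal.Quotient.mk_surjective,
        Ideal.map_comap_of_surjective π Ideal.Quotient.mk_surjective] at h3
      exact (ne_of_lt hlt) (PrimeSpectrum.ext h3)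
  let l2 : LTSeries (PrimeSpectrum (R ⧸ J)) := ⟨l.length, c, hstep⟩
  have hkr := Order.LTSeries.length_le_krullDim l2
  have hcast : ((l.length : ℝ) : EReal) ≤ moduleDimE R (F.homologyAt m) :=
    cast_le_krullDimToEReal (by exact_mod_cast hkr)
  have hsup : moduleDimE R (F.homologyAt m) - ((m : ℝ) : EReal) ≤ F.dim :=
    le_iSup (fun k : ℤ => moduleDimE R (F.homologyAt k) - ((k : ℝ) : EReal)) m
  exact ereal_step hcast hsup hmn
end

section
/- Let R be a commutative Noetherian ring, F : 0 → F_b → ⋯ → F_a → 0 a finite free R-complex with differentials ∂_n, and n an integer with a ≤ n ≤ b. If p is a prime ideal of R such that I_{s_i}(∂_{i+1})_p = R_p for every i with a ≤ i ≤ n, where s_i = Σ_{j ≤ i} (−1)^{i−j} rank_R F_j, then H_i(F)_p = 0 for all i ≤ n. -/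
open Matrix

section Helpers
variable {S : Type} [CommRing S]

lemma mulVecLin_toMatrix'' {m n : ℕ} (f : (Fin m → S) →ₗ[S] (Fin n → S)) :
    (LinearMap.toMatrix' f).mulVecLin = f := by
  ext v i
  simp [Matrix.mulVecLin_apply, LinearMap.toMatrix']

lemma toMatrix'_mulVecLin' {m n : ℕ} (A : Matrix (Fin n) (Fin m) S) :
    LinearMap.toMatrix' A.mulVecLin = A := by
  ext i j
  simp [LinearMap.toMatrix', Matrix.mulVecLin_apply]

lemma submatrix_mul_submatrix' {l m n p q : Type*} [Fintype m] [Fintype p]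
    (A : Matrix l m S) (B : Matrix m n S) (f : p → l) (g : q → n) :
    (A * B).submatrix f g = A.submatrix f _root_.id * B.submatrix _root_.id g := by
  ext i j
  simp [Matrix.mul_apply]

lemma exists_unit_det_of_span [IsLocalRing S] {X : Set S} (h : Ideal.span X = ⊤) :
    ∃ x ∈ X, IsUnit x := by
  by_contra hc
  push_neg at hc
  have hle : Ideal.span X ≤ IsLocalRing.maximalIdeal S :=
    Ideal.span_le.mpr fun x hx => (IsLocalRing.mem_maximalIdeal x).mpr (hc x hx)
  rw [h] at hle
  exact (IsLocalRing.maximalIdeal.isMaximal S).ne_top (top_le_iff.mp hle)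

lemma exists_equiv_extend {t q : ℕ} (g : Fin t → Fin q) (hg : Function.Injective g) :
    ∃ e : (Fin t ⊕ Fin (q - t)) ≃ Fin q, ∀ i, e (Sum.inl i) = g i := by
  classical
  have htq : t ≤ q := by simpa using Fintype.card_le_of_injective g hg
  have hcard : Fintype.card ↥(Set.range g)ᶜ = q - t := by
    rw [Fintype.card_compl_set, Set.card_range_of_injective hg]
    simp
  obtain ⟨e2⟩ : Nonempty (Fin (q - t) ≃ ↥(Set.range g)ᶜ) := by
    rw [← Fintype.card_eq]
    simp [hcard]
  refine ⟨(Equiv.sumCongr (Equiv.ofInjective g hg) e2).trans (Equiv.Set.sumCompl _), fun i => ?_⟩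
  simp

/-- inclusion of the second coordinates -/
def inrL (S : Type) [CommRing S] (t c : ℕ) : (Fin c → S) →ₗ[S] (Fin t ⊕ Fin c → S) where
  toFun x := Sum.elim 0 x
  map_add' x y := by funext j; cases j <;> simp
  map_smul' r x := by funext j; cases j <;> simp

end Helpers

section Step
variable {S : Type} [CommRing S] [IsLocalRing S]

def FinFreeComplex.Inv (G : FinFreeComplex S) (j : ℤ) : Prop :=
  ∃ (t : ℕ) (ρ : (Fin t → S) →ₗ[S] (Fin (G.rank (j + 1)) → S))
    (σ : (Fin (G.rank (j + 1)) → S) →ₗ[S] (Fin t → S)),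
    (t : ℤ) = G.s (j + 1) ∧ σ ∘ₗ ρ = LinearMap.id ∧
    LinearMap.range ρ = LinearMap.ker (G.d j).mulVecLin

lemma FinFreeComplex.step (G : FinFreeComplex S) (j : ℤ)
    (hmin : 0 < G.s (j + 1) → minorsIdeal (G.d (j + 1)) (G.s (j + 1)) = ⊤)
    (hrec : G.s (j + 1 + 1) = (G.rank (j + 1 + 1) : ℤ) - G.s (j + 1))
    (h : G.Inv j) :
    LinearMap.range (G.d (j + 1)).mulVecLin = LinearMap.ker (G.d j).mulVecLin
      ∧ G.Inv (j + 1) := by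
  obtain ⟨t, ρ, σ, ht, hσρ, hρ⟩ := h
  set q : ℕ := G.rank (j + 1 + 1) with hq
  have hli : Function.LeftInverse σ ρ := by
    intro x
    have := LinearMap.congr_fun hσρ x
    simpa using this
  have hρinj : Function.Injective ρ := hli.injective
  have hcpx : ∀ x, (G.d j).mulVecLin ((G.d (j + 1)).mulVecLin x) = 0 := by
    intro x
    rw [← LinearMap.comp_apply, ← Matrix.mulVecLin_mul, G.d_comp_d]
    simp
  set C : (Fin q → S) →ₗ[S] (Fin t → S) := σ ∘ₗ (G.d (j + 1)).mulVecLin with hC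
  have hfac : ρ ∘ₗ C = (G.d (j + 1)).mulVecLin := by
    apply LinearMap.ext; intro x
    have hker : (G.d (j + 1)).mulVecLin x ∈ LinearMap.ker (G.d j).mulVecLin := hcpx x
    rw [← hρ] at hker
    obtain ⟨y, hy⟩ := hker
    simp only [LinearMap.comp_apply, hC, ← hy, hli y]
  set M : Matrix (Fin t) (Fin q) S := LinearMap.toMatrix' C with hM
  have hMC : M.mulVecLin = C := mulVecLin_toMatrix'' C
  set D : Matrix (Fin (G.rank (j + 1))) (Fin t) S := LinearMap.toMatrix' ρ with hD
  have hDC : D.mulVecLin = ρ := mulVecLin_toMatrix'' ρ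
  have hDM : G.d (j + 1) = D * M := by
    have h1 : (G.d (j + 1)).mulVecLin = (D * M).mulVecLin := by
      rw [Matrix.mulVecLin_mul, hDC, hMC, hfac]
    have h2 := congrArg LinearMap.toMatrix' h1
    rwa [toMatrix'_mulVecLin', toMatrix'_mulVecLin'] at h2
  -- obtain an injective column selection with a unit determinant
  have hex : ∃ g : Fin t → Fin q, Function.Injective g ∧ IsUnit (M.submatrix _root_.id g).det :=
    by
    rcases Nat.eq_zero_or_pos t with ht0 | htpos
    · subst ht0
      refine ⟨Fin.elim0, fun x => x.elim0, ?_⟩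
      simp [Matrix.det_fin_zero]
    · have hspos : (0 : ℤ) < G.s (j + 1) := by omega
      have hmin' := hmin hspos
      have hrk : G.rank (j + 1) ≠ 0 := by
        intro h0
        have h1 : ρ (Pi.single ⟨0, htpos⟩ 1) = ρ 0 := by
          funext i
          exact absurd i.2 (by omega)
        have h2 := congrFun (hρinj h1) ⟨0, htpos⟩
        simp at h2
      rw [← ht] at hmin'
      rw [minorsIdeal, if_neg (by omega), if_neg (by tauto)] at hmin'
      simp only [Int.toNat_natCast] at hmin'
      obtain ⟨x, ⟨f, g, hf, hg, rfl⟩, hx⟩ := exists_unit_det_of_span hmin'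
      refine ⟨g, hg, ?_⟩
      rw [hDM, submatrix_mul_submatrix', Matrix.det_mul] at hx
      exact isUnit_of_mul_isUnit_right hx
  obtain ⟨g, hg, hgunit⟩ := hex
  have htq : t ≤ q := by simpa using Fintype.card_le_of_injective g hg
  obtain ⟨e, he⟩ := exists_equiv_extend g hg
  set M₁ : Matrix (Fin t) (Fin t) S := M.submatrix _root_.id (⇑e ∘ Sum.inl) with hM₁
  have hM₁unit : IsUnit M₁.det := by
    have hge : (⇑e ∘ Sum.inl : Fin t → Fin q) = g := funext he
    rw [hM₁, hge]
    exact hgunit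
  set M₂ : Matrix (Fin t) (Fin (q - t)) S := M.submatrix _root_.id (⇑e ∘ Sum.inr) with hM₂
  set Q' : Matrix (Fin t ⊕ Fin (q - t)) (Fin t ⊕ Fin (q - t)) S :=
    Matrix.fromBlocks M₁⁻¹ (-(M₁⁻¹ * M₂)) 0 1 with hQ'
  set R' : Matrix (Fin t ⊕ Fin (q - t)) (Fin t ⊕ Fin (q - t)) S :=
    Matrix.fromBlocks M₁ M₂ 0 1 with hR'
  have hQR : Q' * R' = 1 := by
    rw [hQ', hR', Matrix.fromBlocks_multiply]
    simp [Matrix.nonsing_inv_mul _ hM₁unit, Matrix.fromBlocks_one]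
  have hRQ : R' * Q' = 1 := by
    rw [hQ', hR', Matrix.fromBlocks_multiply]
    have hM2 : M₁ * (M₁⁻¹ * M₂) = M₂ := by
      rw [← Matrix.mul_assoc, Matrix.mul_nonsing_inv _ hM₁unit, Matrix.one_mul]
    simp [Matrix.mul_nonsing_inv _ hM₁unit, Matrix.mul_neg, hM2, Matrix.fromBlocks_one]
  set P : Matrix (Fin q) (Fin t ⊕ Fin (q - t)) S := Q'.submatrix ⇑e.symm _root_.id with hP
  set P' : Matrix (Fin t ⊕ Fin (q - t)) (Fin q) S := R'.submatrix _root_.id ⇑e.symm with hP'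
  have hPP' : P * P' = 1 := by
    rw [hP, hP']
    have h1 := Matrix.submatrix_mul_equiv Q' R' (⇑e.symm) (Equiv.refl _) (⇑e.symm)
    simp only [Equiv.coe_refl] at h1
    rw [h1, hQR, Matrix.submatrix_one_equiv]
  have hP'P : P' * P = 1 := by
    rw [hP, hP']
    have h1 := Matrix.submatrix_mul_equiv R' Q' (_root_.id) e.symm (_root_.id)
    rw [h1, hRQ, Matrix.submatrix_id_id]
  have hMP : M * P = Matrix.fromCols 1 0 := by
    have h1 := Matrix.submatrix_mul_equiv (M.submatrix _root_.id ⇑e) Q'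
      (_root_.id) e.symm (_root_.id)
    have h2 : (M.submatrix _root_.id ⇑e).submatrix _root_.id ⇑e.symm = M := by
      rw [Matrix.submatrix_submatrix]
      simp
    rw [h2] at h1
    rw [hP, h1, Matrix.submatrix_id_id]
    have hMe : M.submatrix _root_.id ⇑e = Matrix.fromCols M₁ M₂ := by
      ext i k
      cases k <;> rfl
    rw [hMe, hQ', Matrix.fromCols_mul_fromBlocks]
    have hM2 : M₁ * (M₁⁻¹ * M₂) = M₂ := by
      rw [← Matrix.mul_assoc, Matrix.mul_nonsing_inv _ hM₁unit, Matrix.one_mul]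
    simp [Matrix.mul_nonsing_inv _ hM₁unit, Matrix.mul_neg, hM2]
  have hMPv : ∀ v : Fin t ⊕ Fin (q - t) → S, M.mulVec (P.mulVec v) = fun i => v (Sum.inl i) := by
    intro v
    rw [Matrix.mulVec_mulVec, hMP]
    funext i
    have : v = Sum.elim (fun a => v (Sum.inl a)) (fun b => v (Sum.inr b)) := by
      funext k; cases k <;> rfl
    rw [this, Matrix.fromCols_mulVec_sumElim]
    simp [Matrix.one_mulVec]
  -- C is surjective
  have hCsurj : Function.Surjective C := by
    intro x
    refine ⟨P.mulVec (Sum.elim x 0), ?_⟩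
    rw [← hMC]
    show M.mulVec (P.mulVec (Sum.elim x 0)) = x
    rw [hMPv]
    rfl
  -- conclusion 1
  have hrange : LinearMap.range (G.d (j + 1)).mulVecLin = LinearMap.ker (G.d j).mulVecLin := by
    rw [← hfac, LinearMap.range_comp, LinearMap.range_eq_top.mpr hCsurj, Submodule.map_top, hρ]
  refine ⟨hrange, ?_⟩
  -- data for Inv (j+1)
  set ι : (Fin (q - t) → S) →ₗ[S] (Fin t ⊕ Fin (q - t) → S) := inrL S t (q - t) with hι
  set π₂ : (Fin t ⊕ Fin (q - t) → S) →ₗ[S] (Fin (q - t) → S) := LinearMap.funLeft S S Sum.inr with hπ₂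
  set ρ' : (Fin (q - t) → S) →ₗ[S] (Fin q → S) := P.mulVecLin ∘ₗ ι with hρ'
  set σ' : (Fin q → S) →ₗ[S] (Fin (q - t) → S) := π₂ ∘ₗ P'.mulVecLin with hσ'
  refine ⟨q - t, ρ', σ', ?_, ?_, ?_⟩
  · rw [hrec, ← ht]
    push_cast [Nat.cast_sub htq]
    ring
  · apply LinearMap.ext
    intro x
    simp only [hρ', hσ', LinearMap.comp_apply, Matrix.mulVecLin_apply, LinearMap.id_coe,
      _root_.id]
    rw [Matrix.mulVec_mulVec, hP'P, Matrix.one_mulVec]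
    rfl
  · -- range ρ' = ker (G.d (j+1)).mulVecLin
    have hkerC : LinearMap.ker (G.d (j + 1)).mulVecLin = LinearMap.ker C := by
      rw [← hfac, LinearMap.ker_comp, LinearMap.ker_eq_bot.mpr hρinj, Submodule.comap_bot]
    rw [hkerC]
    apply le_antisymm
    · rintro _ ⟨x, rfl⟩
      simp only [LinearMap.mem_ker, hρ', LinearMap.comp_apply, Matrix.mulVecLin_apply]
      rw [← hMC]
      show M.mulVec (P.mulVec (ι x)) = 0
      rw [hMPv]
      funext i
      show (Sum.elim 0 x : Fin t ⊕ Fin (q - t) → S) (Sum.inl i) = 0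
      rfl
    · intro y hy
      have hy' : C y = 0 := hy
      set w : Fin t ⊕ Fin (q - t) → S := P'.mulVec y with hw
      have hPw : P.mulVec w = y := by
        rw [hw, Matrix.mulVec_mulVec, hPP', Matrix.one_mulVec]
      have hwl : ∀ i, w (Sum.inl i) = 0 := by
        intro i
        have h1 : M.mulVec (P.mulVec w) = fun i => w (Sum.inl i) := hMPv w
        rw [hPw] at h1
        have h2 : M.mulVec y = 0 := by
          rw [← hy', ← hMC]; rfl
        rw [h2] at h1
        exact (congrFun h1 i).symm
      refine ⟨fun k => w (Sum.inr k), ?_⟩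
      simp only [hρ', LinearMap.comp_apply, Matrix.mulVecLin_apply]
      have : ι (fun k => w (Sum.inr k)) = w := by
        funext k
        cases k with
        | inl i => exact (hwl i).symm
        | inr i => rfl
      rw [this, hPw]
end Step

section SLemmas
variable {R : Type} [CommRing R] (F : FinFreeComplex R)

lemma FinFreeComplex.s_eq_sum_s3 (n : ℤ) :
    F.s n = ∑ i ∈ Finset.Icc F.a n, (-1 : ℤ) ^ (n - i).toNat * (F.rank i : ℤ) := by
  apply finsum_mem_eq_sum_of_inter_support_eq
  ext x
  simp only [Set.mem_inter_iff, Set.mem_Iic, Finset.coe_Icc, Set.mem_Icc,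
    Function.mem_support]
  constructor
  · rintro ⟨hx, hs⟩
    refine ⟨⟨?_, hx⟩, hs⟩
    by_contra h
    exact hs (by simp [F.rank_eq_zero x (Or.inl (by omega))])
  · rintro ⟨⟨_, hx⟩, hs⟩
    exact ⟨hx, hs⟩

lemma FinFreeComplex.s_base : F.s F.a = (F.rank F.a : ℤ) := by
  rw [F.s_eq_sum_s3]
  simp

lemma FinFreeComplex.s_rec_s3 (n : ℤ) (h : F.a - 1 ≤ n) :
    F.s (n + 1) = (F.rank (n + 1) : ℤ) - F.s n := by
  rw [F.s_eq_sum_s3, F.s_eq_sum_s3]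
  have hins : Finset.Icc F.a (n + 1) = insert (n + 1) (Finset.Icc F.a n) := by
    ext x
    simp only [Finset.mem_Icc, Finset.mem_insert]
    omega
  rw [hins, Finset.sum_insert (by simp only [Finset.mem_Icc]; omega)]
  simp only [sub_self, Int.toNat_zero, pow_zero, one_mul]
  rw [sub_eq_add_neg, ← Finset.sum_neg_distrib]
  congr 1
  apply Finset.sum_congr rfl
  intro x hx
  simp only [Finset.mem_Icc] at hx
  have h2 : (n + 1 - x).toNat = (n - x).toNat + 1 := by omega
  rw [h2, pow_succ]
  ring
end SLemmas

section Induction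
variable {S : Type} [CommRing S] [IsLocalRing S]

lemma FinFreeComplex.inv_base (G : FinFreeComplex S) : G.Inv (G.a - 1) := by
  refine ⟨G.rank (G.a - 1 + 1), LinearMap.id, LinearMap.id, ?_, ?_, ?_⟩
  · have h1 : G.a - 1 + 1 = G.a := by ring
    rw [h1, G.s_base]
  · rfl
  · rw [LinearMap.range_id]
    symm
    rw [LinearMap.ker_eq_top]
    have h0 : G.rank (G.a - 1) = 0 := G.rank_eq_zero _ (Or.inl (by omega))
    apply LinearMap.ext
    intro x
    funext i
    exact absurd i.2 (by omega)

lemma FinFreeComplex.inv_all (G : FinFreeComplex S) (n : ℤ)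
    (hmin : ∀ i : ℤ, G.a ≤ i → i ≤ n → minorsIdeal (G.d i) (G.s i) = ⊤) :
    ∀ j : ℤ, G.a - 1 ≤ j → j ≤ n → G.Inv j := by
  have H := Int.le_induction (motive := fun j _ => j ≤ n → G.Inv j) (m := G.a - 1)
    (fun _ => G.inv_base)
    (fun m hm ih hmn =>
      (G.step m (fun _ => hmin (m + 1) (by omega) (by omega))
        (G.s_rec_s3 (m + 1) (by omega)) (ih (by omega))).2)
  exact fun j hj hjn => H j hj hjn

lemma FinFreeComplex.exact (G : FinFreeComplex S) (n : ℤ)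
    (hmin : ∀ i : ℤ, G.a ≤ i → i ≤ n → minorsIdeal (G.d i) (G.s i) = ⊤) :
    ∀ i : ℤ, G.a ≤ i → i ≤ n →
      LinearMap.range (G.d (i - 1 + 1)).mulVecLin = LinearMap.ker (G.d (i - 1)).mulVecLin := by
  intro i h1 h2
  have hInv := G.inv_all n hmin (i - 1) (by omega) (by omega)
  refine (G.step (i - 1) ?_ (G.s_rec_s3 (i - 1 + 1) (by omega)) hInv).1
  intro hpos
  rw [show i - 1 + 1 = i from by ring]
  exact hmin i h1 h2
end Induction

section MapRing
variable {R S : Type} [CommRing R] [CommRing S]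

def FinFreeComplex.mapRing (F : FinFreeComplex R) (φ : R →+* S) : FinFreeComplex S where
  a := F.a
  b := F.b
  rank := F.rank
  d n := (F.d n).map φ
  rank_eq_zero := F.rank_eq_zero
  d_comp_d n := by
    rw [← Matrix.map_mul, F.d_comp_d]
    exact Matrix.map_zero _ (map_zero φ)

lemma FinFreeComplex.s_mapRing (F : FinFreeComplex R) (φ : R →+* S) : (F.mapRing φ).s = F.s := rfl

lemma minorsIdeal_map (φ : R →+* S) {p q : ℕ} (A : Matrix (Fin p) (Fin q) R) (s : ℤ) :
    minorsIdeal (A.map φ) s = Ideal.map φ (minorsIdeal A s) := by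
  unfold minorsIdeal
  split_ifs with h1 h2
  · rw [Ideal.map_top]
  · rw [Ideal.map_top]
  · rw [Ideal.map_span]
    congr 1
    ext x
    constructor
    · rintro ⟨f, g, hf, hg, rfl⟩
      refine ⟨(A.submatrix f g).det, ⟨f, g, hf, hg, rfl⟩, ?_⟩
      have hsub : φ.mapMatrix (A.submatrix f g) = (A.map φ).submatrix f g := by
        ext i j
        simp [RingHom.mapMatrix_apply]
      rw [RingHom.map_det, hsub]
    · rintro ⟨y, ⟨f, g, hf, hg, rfl⟩, rfl⟩
      refine ⟨f, g, hf, hg, ?_⟩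
      have hsub : φ.mapMatrix (A.submatrix f g) = (A.map φ).submatrix f g := by
        ext i j
        simp [RingHom.mapMatrix_apply]
      rw [RingHom.map_det, hsub]

lemma mulVec_map (φ : R →+* S) {p q : ℕ} (A : Matrix (Fin p) (Fin q) R) (x : Fin q → R) :
    (A.map φ).mulVec (fun j => φ (x j)) = fun i => φ (A.mulVec x i) := by
  funext i
  simp [Matrix.mulVec, dotProduct, map_sum]
end MapRing


/-- If `I_{s_i}(∂_{i+1})` generates the unit ideal in `R_p` for every `i` with `a ≤ i ≤ n`,
then the localized homology modules `H_i(F)_p` vanish for all `i ≤ n`. -/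
theorem FinFreeComplex.homology_vanish_of_minors_localize_unit (R : Type) [CommRing R]
    [IsNoetherianRing R] (F : FinFreeComplex R) (n : ℤ) (han : F.a ≤ n) (hnb : n ≤ F.b)
    (p : Ideal R) [p.IsPrime]
    (hunit : ∀ i : ℤ, F.a ≤ i → i ≤ n →
      Ideal.map (algebraMap R (Localization.AtPrime p)) (minorsIdeal (F.d i) (F.s i)) = ⊤) :
    ∀ i : ℤ, i ≤ n → Subsingleton (LocalizedModule p.primeCompl (F.homologyAt i)) := by
  intro i hi
  set S := Localization.AtPrime p with hS
  set φ := algebraMap R S with hφ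
  set G : FinFreeComplex S := F.mapRing φ with hG
  have hGmin : ∀ k : ℤ, G.a ≤ k → k ≤ n → minorsIdeal (G.d k) (G.s k) = ⊤ := by
    intro k h1 h2
    show minorsIdeal ((F.d k).map φ) (F.s k) = ⊤
    rw [minorsIdeal_map]
    exact hunit k h1 h2
  have main : ∀ x ∈ LinearMap.ker (F.d (i - 1)).mulVecLin,
      ∃ c ∈ p.primeCompl, c • x ∈ LinearMap.range (F.d (i - 1 + 1)).mulVecLin := by
    intro x hx
    by_cases hcase : F.a ≤ i
    · have hex := G.exact n hGmin i hcase hi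
      have hxS : (fun j => φ (x j)) ∈ LinearMap.ker (G.d (i - 1)).mulVecLin := by
        simp only [LinearMap.mem_ker, Matrix.mulVecLin_apply] at hx ⊢
        show ((F.d (i - 1)).map φ).mulVec _ = 0
        rw [mulVec_map]
        funext k
        rw [show (F.d (i - 1)).mulVec x = 0 from hx]
        simp
      rw [← hex] at hxS
      obtain ⟨y, hy⟩ := hxS
      obtain ⟨b, hb⟩ := IsLocalization.exist_integer_multiples p.primeCompl Finset.univ y
      choose z hz using fun j => hb j (Finset.mem_univ j)
      set w : Fin (F.rank (i - 1 + 1)) → R := (F.d (i - 1 + 1)).mulVec z with hw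
      have h1 : ∀ k, φ (w k) = φ ((b : R) * x k) := by
        intro k
        have h2 : (G.d (i - 1 + 1)).mulVec (fun j => φ (z j)) = fun k => φ (w k) :=
          mulVec_map φ _ z
        have h3 : (fun j => φ (z j)) = fun j => φ (b : R) * y j := by
          funext j
          rw [hz j, Algebra.smul_def]
        have h4 : (G.d (i - 1 + 1)).mulVec (fun j => φ (b : R) * y j)
            = fun k => φ (b : R) * ((G.d (i - 1 + 1)).mulVec y k) := by
          have h5 : (fun j => φ (b : R) * y j) = φ (b : R) • y := rfl
          rw [h5, Matrix.mulVec_smul]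
          rfl
        have h6 : (G.d (i - 1 + 1)).mulVec y = fun k => φ (x k) := hy
        have := congrFun (h2.symm.trans (by rw [h3, h4, h6])) k
        rw [this, _root_.map_mul]
      have h7 : ∀ k, ∃ u : p.primeCompl, (u : R) * ((b : R) * x k - w k) = 0 := by
        intro k
        have : φ ((b : R) * x k - w k) = 0 := by
          rw [map_sub, h1 k, sub_self]
        exact (IsLocalization.map_eq_zero_iff p.primeCompl S _).mp this
      choose u hu using h7
      set U : R := ∏ k, (u k : R) with hU
      have hUmem : U ∈ p.primeCompl := Submonoid.prod_mem _ (fun k _ => (u k).2)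
      have hUk : ∀ k, U * ((b : R) * x k - w k) = 0 := by
        intro k
        rw [hU, ← Finset.mul_prod_erase Finset.univ _ (Finset.mem_univ k)]
        have : (u k : R) * (∏ j ∈ Finset.univ.erase k, (u j : R)) * ((b : R) * x k - w k)
            = (∏ j ∈ Finset.univ.erase k, (u j : R)) * ((u k : R) * ((b : R) * x k - w k)) := by
          ring
        rw [this, hu k, mul_zero]
      refine ⟨U * (b : R), Submonoid.mul_mem _ hUmem b.2, ⟨U • z, ?_⟩⟩
      show (F.d (i - 1 + 1)).mulVec (U • z) = (U * (b : R)) • x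
      rw [show (F.d (i - 1 + 1)).mulVec (U • z) = U • (F.d (i - 1 + 1)).mulVec z from
        Matrix.mulVec_smul _ _ _]
      funext k
      have := hUk k
      show U • ((F.d (i - 1 + 1)).mulVec z) k = (U * (b : R)) • x k
      simp only [Pi.smul_apply, smul_eq_mul, ← hw]
      have h8 : U * ((b : R) * x k) = U * w k := by
        have h9 := hUk k
        rw [mul_sub] at h9
        have := sub_eq_zero.mp h9
        linear_combination this
      rw [← h8]
      ring
    · refine ⟨1, Submonoid.one_mem _, 0, ?_⟩
      have h0 : F.rank (i - 1 + 1) = 0 := F.rank_eq_zero _ (Or.inl (by omega))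
      have hx0 : x = 0 := by
        funext k
        exact absurd k.2 (by omega)
      rw [hx0]
      simp
  have key : ∀ m : F.homologyAt i, ∃ c ∈ p.primeCompl, c • m = 0 := by
    intro m
    obtain ⟨y, rfl⟩ := Submodule.Quotient.mk_surjective _ m
    obtain ⟨c, hc, hcx⟩ := main y.1 y.2
    refine ⟨c, hc, ?_⟩
    rw [← Submodule.Quotient.mk_smul, Submodule.Quotient.mk_eq_zero]
    exact hcx
  refine ⟨fun m₁ m₂ => ?_⟩
  have h0 : ∀ m : LocalizedModule p.primeCompl (F.homologyAt i), m = 0 := by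
    intro m
    induction m using LocalizedModule.induction_on with
    | h a s =>
      obtain ⟨c, hc, hcz⟩ := key a
      rw [← LocalizedModule.zero_mk s]
      apply LocalizedModule.mk_eq.mpr
      refine ⟨⟨c, hc⟩, ?_⟩
      simp only [Submonoid.mk_smul, Submonoid.smul_def]
      rw [smul_zero, smul_zero, smul_comm, hcz, smul_zero]
  rw [h0 m₁, h0 m₂]
end
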